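/- Let ν ≠ 0 and define the trichromatic complex amplitude A(ξ,τ) = 2 − 2e^{i(ν²ξ − ντ)} + e^{i(ν²ξ + ντ)}. Then: (i) if A(ξ,τ) = 0 at some point, then cos(2ντ) = 1/4; and (ii) there exist (ξ,τ) ∈ ℝ² with A(ξ,τ) = 0. Hence the trichromatic wave field possesses singular points. -/

import Mathlib

open Real Filter Topology

private lemma tri_key (φ θ : ℝ) :
    (2 : ℂ) - 2 * Complex.exp (Complex.I * ((φ:ℂ) - (θ:ℂ))) +
      Complex.exp (Complex.I * ((φ:ℂ) + (θ:ℂ))) =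
    2 - Complex.exp ((φ:ℂ) * Complex.I) *
      ((Real.cos θ : ℂ) - 3 * (Real.sin θ : ℂ) * Complex.I) := by

  have h1 : Complex.I * ((φ:ℂ) - (θ:ℂ)) = (φ:ℂ) * Complex.I + ((-θ : ℝ):ℂ) * Complex.I := by
    push_cast; ring
  have h2 : Complex.I * ((φ:ℂ) + (θ:ℂ)) = (φ:ℂ) * Complex.I + ((θ : ℝ):ℂ) * Complex.I := by
    ring
  have e1 : Complex.exp (((-θ:ℝ):ℂ) * Complex.I)
      = (Real.cos θ : ℂ) - (Real.sin θ : ℂ) * Complex.I := by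
    rw [Complex.exp_mul_I, ← Complex.ofReal_cos, ← Complex.ofReal_sin, Real.cos_neg, Real.sin_neg]
    push_cast; ring
  have e2 : Complex.exp (((θ:ℝ):ℂ) * Complex.I)
      = (Real.cos θ : ℂ) + (Real.sin θ : ℂ) * Complex.I := by
    rw [Complex.exp_mul_I, ← Complex.ofReal_cos, ← Complex.ofReal_sin]
  rw [h1, h2, Complex.exp_add, Complex.exp_add, e1, e2]
  ring

private lemma tri_normSq (θ : ℝ) :
    Complex.normSq ((Real.cos θ : ℂ) - 3 * (Real.sin θ : ℂ) * Complex.I) =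
      Real.cos θ ^ 2 + 9 * Real.sin θ ^ 2 := by
  simp only [Complex.normSq_apply, Complex.sub_re, Complex.sub_im, Complex.mul_re, Complex.mul_im,
    Complex.I_re, Complex.I_im, Complex.ofReal_re, Complex.ofReal_im,
    Complex.re_ofNat, Complex.im_ofNat]
  ring

theorem trichromatic_singular_points
    (ν : ℝ) (hν : ν ≠ 0)
    (A : ℝ → ℝ → ℂ)
    (hA : A = fun (ξ τ : ℝ) => 2 - 2 * Complex.exp (Complex.I * ((ν:ℂ)^2 * (ξ:ℂ) - (ν:ℂ) * (τ:ℂ))) +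
                         Complex.exp (Complex.I * ((ν:ℂ)^2 * (ξ:ℂ) + (ν:ℂ) * (τ:ℂ)))) :
    (∀ ξ τ : ℝ, A ξ τ = 0 → Real.cos (2 * ν * τ) = 1/4) ∧
    (∃ ξ τ : ℝ, A ξ τ = 0) := by
  subst hA
  constructor
  · intro ξ τ h
    simp only at h
    have hc : ((ν:ℂ)^2 * (ξ:ℂ)) = ((ν^2*ξ : ℝ) : ℂ) := by push_cast; ring
    have hc2 : ((ν:ℂ) * (τ:ℂ)) = ((ν*τ : ℝ) : ℂ) := by push_cast; ring
    rw [hc, hc2, tri_key (ν^2*ξ) (ν*τ)] at h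
    set θ := ν * τ with hθ
    set z : ℂ := ((Real.cos θ : ℂ) - 3 * (Real.sin θ : ℂ) * Complex.I) with hz
    have hez : Complex.exp (((ν^2*ξ : ℝ):ℂ) * Complex.I) * z = 2 := by
      linear_combination -h
    have habs : ‖z‖ = 2 := by
      have := congrArg (‖·‖) hez
      rwa [norm_mul, Complex.norm_exp_ofReal_mul_I, one_mul, Complex.norm_two] at this
    have hns : Complex.normSq z = 4 := by
      rw [← Complex.sq_norm, habs]; norm_num
    rw [tri_normSq] at hns
    have hsc : Real.sin θ ^ 2 + Real.cos θ ^ 2 = 1 := Real.sin_sq_add_cos_sq θ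
    have h2 : 2 * ν * τ = 2 * θ := by rw [hθ]; ring
    rw [h2, Real.cos_two_mul]
    nlinarith [hns, hsc]
  · -- existence
    set θ := Real.arccos (Real.sqrt (5/8)) with hθ
    have h58 : (0:ℝ) ≤ 5/8 := by norm_num
    have hle1 : Real.sqrt (5/8) ≤ 1 := by
      rw [show (1:ℝ) = Real.sqrt 1 by simp]
      exact Real.sqrt_le_sqrt (by norm_num)
    have hge : (-1:ℝ) ≤ Real.sqrt (5/8) := le_trans (by norm_num) (Real.sqrt_nonneg _)
    have hcos : Real.cos θ = Real.sqrt (5/8) := by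
      rw [hθ]; exact Real.cos_arccos hge hle1
    have hsin : Real.sin θ = Real.sqrt (3/8) := by
      rw [hθ, Real.sin_arccos]
      congr 1
      rw [Real.sq_sqrt h58]
      norm_num
    have hcos2 : Real.cos θ ^ 2 = 5/8 := by rw [hcos]; exact Real.sq_sqrt h58
    have hsin2 : Real.sin θ ^ 2 = 3/8 := by rw [hsin]; exact Real.sq_sqrt (by norm_num)
    set z : ℂ := ((Real.cos θ : ℂ) - 3 * (Real.sin θ : ℂ) * Complex.I) with hz
    have hns : Complex.normSq z = 4 := by rw [hz, tri_normSq, hcos2, hsin2]; norm_num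
    have habs : ‖z‖ = 2 := by
      rw [Complex.norm_def, hns]
      rw [show (4:ℝ) = 2^2 by norm_num]
      exact Real.sqrt_sq (by norm_num)
    set r := z.arg with hr
    refine ⟨(-r) / ν^2, θ / ν, ?_⟩
    simp only
    have hν2 : (ν:ℂ) ≠ 0 := Complex.ofReal_ne_zero.mpr hν
    have hc : ((ν:ℂ)^2 * ((-r / ν^2 : ℝ):ℂ)) = ((-r : ℝ) : ℂ) := by
      push_cast; field_simp
    have hc2 : ((ν:ℂ) * ((θ / ν : ℝ):ℂ)) = ((θ : ℝ) : ℂ) := by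
      push_cast; field_simp
    rw [hc, hc2, tri_key (-r) θ, ← hz]
    have hzz : ((‖z‖ : ℝ) : ℂ) * Complex.exp ((r:ℂ) * Complex.I) = z :=
      Complex.norm_mul_exp_arg_mul_I z
    rw [habs] at hzz
    have hne : Complex.exp ((r : ℂ) * Complex.I) ≠ 0 := Complex.exp_ne_zero _
    have hfin : Complex.exp (((-r : ℝ):ℂ) * Complex.I) * z = 2 := by
      rw [show (((-r : ℝ):ℂ) * Complex.I) = -((r:ℂ) * Complex.I) by push_cast; ring,
        Complex.exp_neg, ← hzz]
      push_cast
      field_simp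
    rw [hfin]
    ring
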